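/- arXiv:1811.07148 — 2 statements merged into one kernel-verified Lean document; each statement's English description precedes it below -/
import Mathlib

section
/- Suppose φ, ψ : 𝓕 → 𝓔 are additive mappings such that ⟨φ(z), ψ(w)⟩ = 0 and a·⟨φ(z), φ(w)⟩·a* = (1−a)·⟨ψ(z), ψ(w)⟩·(1−a)* for all z, w ∈ 𝓕. If f : 𝓔 → 𝓖 is an even orthogonally a-Jensen mapping (f(−x) = f(x) for all x) with f(0) = 0, then f(φ(x) + φ(y)) + f(φ(x) − φ(y)) = 2 f(φ(x)) + 2 f(φ(y)) and f(ψ(x) + ψ(y)) + f(ψ(x) − ψ(y)) = 2 f(ψ(x)) + 2 f(ψ(y)) for all x, y ∈ 𝓕; that is, f is quadratic on φ(𝓕) and on ψ(𝓕). -/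
open scoped RightActions

/-- The Hilbert C⋆-module class as it stood in Mathlib (December 2024): a right `A`-module
structure (action of `Aᵐᵒᵖ`) with an `A`-valued inner product. -/
class RightCStarModule (A : outParam <| Type*) (E : Type*) [NonUnitalSemiring A] [StarRing A]
    [Module ℂ A] [AddCommGroup E] [Module ℂ E] [PartialOrder A] [SMul Aᵐᵒᵖ E] [Norm A] [Norm E]
    extends Inner A E where
  inner_add_right {x} {y} {z} : inner x (y + z) = inner x y + inner x z
  inner_self_nonneg {x} : 0 ≤ inner x x
  inner_self {x} : inner x x = 0 ↔ x = 0
  inner_op_smul_right {a : A} {x y : E} : inner x (y <• a) = inner x y * a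
  inner_smul_right_complex {z : ℂ} {x} {y} : inner x (z • y) = z • inner x y
  star_inner x y : star (inner x y) = inner y x
  norm_eq_sqrt_norm_inner_self x : ‖x‖ = √‖inner x x‖

variable {A : Type*} [CStarAlgebra A] [PartialOrder A] [StarOrderedRing A]
variable {E : Type*} [NormedAddCommGroup E] [Module ℂ E] [Module Aᵐᵒᵖ E] [RightCStarModule A E]
variable {F : Type*} [NormedAddCommGroup F] [Module ℂ F] [Module Aᵐᵒᵖ F] [RightCStarModule A F]
variable {G : Type*} [NormedAddCommGroup G] [Module ℂ G] [Module Aᵐᵒᵖ G] [RightCStarModule A G]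

theorem rcm_inner_add_left {x y z : E} :
    inner (𝕜 := A) (x + y) z = inner (𝕜 := A) x z + inner (𝕜 := A) y z := by
  rw [← RightCStarModule.star_inner z, RightCStarModule.inner_add_right, star_add,
    RightCStarModule.star_inner, RightCStarModule.star_inner]

theorem rcm_inner_zero_right {x : E} : inner (𝕜 := A) x 0 = 0 := by
  have h : inner (𝕜 := A) x (0 + 0) = inner (𝕜 := A) x 0 + inner (𝕜 := A) x 0 :=
    RightCStarModule.inner_add_right
  rw [add_zero] at h
  exact (add_eq_left.mp h.symm)

theorem rcm_inner_zero_left {x : E} : inner (𝕜 := A) 0 x = 0 := by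
  rw [← RightCStarModule.star_inner x, rcm_inner_zero_right, star_zero]

@[simp] theorem rcm_inner_neg_right {x y : E} : inner (𝕜 := A) x (-y) = -inner (𝕜 := A) x y := by
  have h : inner (𝕜 := A) x (-y + y) = inner (𝕜 := A) x (-y) + inner (𝕜 := A) x y :=
    RightCStarModule.inner_add_right
  rw [neg_add_cancel, rcm_inner_zero_right] at h
  exact eq_neg_of_add_eq_zero_left h.symm

@[simp] theorem rcm_inner_sub_right {x y z : E} :
    inner (𝕜 := A) x (y - z) = inner (𝕜 := A) x y - inner (𝕜 := A) x z := by
  rw [sub_eq_add_neg, RightCStarModule.inner_add_right, rcm_inner_neg_right, ← sub_eq_add_neg]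

theorem rcm_inner_op_smul_left {a : A} {x y : E} :
    inner (𝕜 := A) (x <• a) y = star a * inner (𝕜 := A) x y := by
  rw [← RightCStarModule.star_inner y, RightCStarModule.inner_op_smul_right, star_mul,
    RightCStarModule.star_inner]

/-- A mapping `f : E → G` between inner product `A`-modules is *orthogonally `a`-Jensen* if
`⟪x, y⟫ = 0` implies `f (a·x + (1-a)·y) = a·f x + (1-a)·f y` (module actions written as right
actions `<•`, since `E`, `G` are right `A`-modules). -/
def OrthAJensen (a : A) (f : E → G) : Prop :=
  ∀ x y : E, inner (𝕜 := A) x y = 0 →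
    f (x <• a + y <• (1 - a)) = f x <• a + f y <• (1 - a)

theorem aux_quad (f : E → G)
    (Hadd : ∀ p q : E, inner (𝕜 := A) p q = 0 → f (p + q) = f p + f q)
    (heven : ∀ x : E, f (-x) = f x) (hf0 : f 0 = 0)
    (φ ψ : F → E)
    (hφ : ∀ z w : F, φ (z + w) = φ z + φ w)
    (hψ : ∀ z w : F, ψ (z + w) = ψ z + ψ w)
    (horth : ∀ z w : F, inner (𝕜 := A) (φ z) (ψ w) = 0)
    (hgram : ∀ z w : F, inner (𝕜 := A) (ψ z) (ψ w) = inner (𝕜 := A) (φ z) (φ w))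
    (x y : F) :
    f (φ x + φ y) + f (φ x - φ y) = 2 • f (φ x) + 2 • f (φ y) := by
  have hφ0 : φ 0 = 0 := by
    have h := hφ 0 0
    rw [add_zero] at h
    have h2 : φ 0 + 0 = φ 0 + φ 0 := by rw [add_zero]; exact h
    exact (add_left_cancel h2).symm
  have hψ0 : ψ 0 = 0 := by
    have h := hψ 0 0
    rw [add_zero] at h
    have h2 : ψ 0 + 0 = ψ 0 + ψ 0 := by rw [add_zero]; exact h
    exact (add_left_cancel h2).symm
  have hφneg : ∀ t : F, φ (-t) = -φ t := by
    intro t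
    have h := hφ t (-t)
    rw [add_neg_cancel, hφ0] at h
    exact (neg_eq_of_add_eq_zero_right h.symm).symm
  have hψneg : ∀ t : F, ψ (-t) = -ψ t := by
    intro t
    have h := hψ t (-t)
    rw [add_neg_cancel, hψ0] at h
    exact (neg_eq_of_add_eq_zero_right h.symm).symm
  have hφsub : ∀ s t : F, φ (s - t) = φ s - φ t := by
    intro s t; rw [sub_eq_add_neg, hφ, hφneg, ← sub_eq_add_neg]
  have hψsub : ∀ s t : F, ψ (s - t) = ψ s - ψ t := by
    intro s t; rw [sub_eq_add_neg, hψ, hψneg, ← sub_eq_add_neg]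
  have horth' : ∀ z w : F, inner (𝕜 := A) (ψ z) (φ w) = 0 := by
    intro z w; rw [← RightCStarModule.star_inner, horth, star_zero]
  have key : ∀ s t : F, inner (𝕜 := A) (φ s + ψ s) (φ t - ψ t) = 0 := by
    intro s t
    simp [rcm_inner_add_left, horth, horth', hgram]
  have hR : ∀ s t : F,
      f (φ (s + t)) + f (ψ (s - t)) = f (φ s) + f (ψ s) + (f (φ t) + f (ψ t)) := by
    intro s t
    have e2 : φ (s + t) + ψ (s - t) = φ s + ψ s + (φ t - ψ t) := by
      rw [hφ, hψsub]; abel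
    have e3 : f (φ (s + t) + ψ (s - t)) = f (φ (s + t)) + f (ψ (s - t)) :=
      Hadd _ _ (horth _ _)
    rw [← e3, e2, Hadd _ _ (key s t), Hadd _ _ (horth s s)]
    have hneg : inner (𝕜 := A) (φ t) (-ψ t) = 0 := by simp [horth]
    rw [sub_eq_add_neg, Hadd _ _ hneg, heven]
  have hgh : ∀ u : F, f (φ u) = f (ψ u) := by
    intro u
    have hss : ((2⁻¹ : ℂ) • u) + ((2⁻¹ : ℂ) • u) = u := by
      rw [← add_smul]
      have : ((2⁻¹ : ℂ) + 2⁻¹) = 1 := by norm_num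
      rw [this, one_smul]
    have h1 := hR ((2⁻¹ : ℂ) • u) ((2⁻¹ : ℂ) • u)
    rw [hss, sub_self, hψ0, hf0, add_zero] at h1
    have h2 := hR ((2⁻¹ : ℂ) • u) (-((2⁻¹ : ℂ) • u))
    rw [add_neg_cancel, hφ0, hf0, zero_add, sub_neg_eq_add, hss, hφneg, heven, hψneg,
      heven] at h2
    rw [h1, h2]
  have hfin := hR x y
  rw [hφ x y, ← hgh (x - y), hφsub x y, ← hgh x, ← hgh y] at hfin
  calc f (φ x + φ y) + f (φ x - φ y)
      = f (φ x) + f (φ x) + (f (φ y) + f (φ y)) := hfin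
    _ = 2 • f (φ x) + 2 • f (φ y) := by rw [two_smul, two_smul]

/-- First part of Proposition 2.5: an even orthogonally `a`-Jensen mapping with `f 0 = 0`
is quadratic on `φ(F)` and on `ψ(F)`. -/
theorem even_quadratic_on_ranges (a : A) [Invertible a] [Invertible (1 - a)] (φ ψ : F → E)
    (hφ : ∀ z w : F, φ (z + w) = φ z + φ w)
    (hψ : ∀ z w : F, ψ (z + w) = ψ z + ψ w)
    (horth : ∀ z w : F, inner (𝕜 := A) (φ z) (ψ w) = 0)
    (heq : ∀ z w : F,
      a * inner (𝕜 := A) (φ z) (φ w) * star a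
        = (1 - a) * inner (𝕜 := A) (ψ z) (ψ w) * star (1 - a))
    (f : E → G) (hf : OrthAJensen a f) (heven : ∀ x : E, f (-x) = f x) (hf0 : f 0 = 0) :
    ∀ x y : F,
      f (φ x + φ y) + f (φ x - φ y) = 2 • f (φ x) + 2 • f (φ y) ∧
      f (ψ x + ψ y) + f (ψ x - ψ y) = 2 • f (ψ x) + 2 • f (ψ y) := by
  -- f commutes with the actions of `a` and `1 - a`
  have hacta : ∀ p : E, f (p <• a) = f p <• a := by
    intro p
    have h := hf p 0 rcm_inner_zero_right
    simpa [hf0] using h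
  have hactb : ∀ p : E, f (p <• (1 - a)) = f p <• (1 - a) := by
    intro p
    have h := hf 0 p rcm_inner_zero_left
    simpa [hf0] using h
  -- orthogonal additivity
  have Hadd : ∀ p q : E, inner (𝕜 := A) p q = 0 → f (p + q) = f p + f q := by
    intro p q hpq
    have horth12 : inner (𝕜 := A) (p <• ⅟a) (q <• ⅟(1 - a)) = 0 := by
      rw [rcm_inner_op_smul_left, RightCStarModule.inner_op_smul_right, hpq]
      simp
    have h := hf _ _ horth12
    have e1 : (p <• ⅟a) <• a = p := by
      rw [smul_smul, ← MulOpposite.op_mul, invOf_mul_self, MulOpposite.op_one, one_smul]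
    have e2 : (q <• ⅟(1 - a)) <• (1 - a) = q := by
      rw [smul_smul, ← MulOpposite.op_mul, invOf_mul_self, MulOpposite.op_one, one_smul]
    rw [← hacta, ← hactb, e1, e2] at h
    exact h
  have key_a : star a * star (⅟a) = 1 := by
    rw [← star_mul, invOf_mul_self, star_one]
  have key_c : star (1 - a) * star (⅟(1 - a)) = 1 := by
    rw [← star_mul, invOf_mul_self, star_one]
  have alg : ∀ I J : A, a * J * star a = (1 - a) * I * star (1 - a) →
      star (star (⅟a * (1 - a))) * I * star (⅟a * (1 - a)) = J := by
    intro I J h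
    rw [star_star, star_mul]
    calc ⅟a * (1 - a) * I * (star (1 - a) * star ⅟a)
        = ⅟a * ((1 - a) * I * star (1 - a)) * star ⅟a := by simp only [mul_assoc]
      _ = ⅟a * (a * J * star a) * star ⅟a := by rw [← h]
      _ = J := by
          simp only [mul_assoc]
          rw [key_a, mul_one, ← mul_assoc, invOf_mul_self, one_mul]
  have alg2 : ∀ I J : A, a * I * star a = (1 - a) * J * star (1 - a) →
      star (star (⅟(1 - a) * a)) * I * star (⅟(1 - a) * a) = J := by
    intro I J h
    rw [star_star, star_mul]
    calc ⅟(1 - a) * a * I * (star a * star ⅟(1 - a))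
        = ⅟(1 - a) * (a * I * star a) * star ⅟(1 - a) := by simp only [mul_assoc]
      _ = ⅟(1 - a) * ((1 - a) * J * star (1 - a)) * star ⅟(1 - a) := by rw [h]
      _ = J := by
          simp only [mul_assoc]
          rw [key_c, mul_one, ← mul_assoc, invOf_mul_self, one_mul]
  intro x y
  constructor
  · -- φ part, with ψ' z = ψ z <• star (⅟a * (1 - a))
    refine aux_quad f Hadd heven hf0 φ (fun z => ψ z <• star (⅟a * (1 - a))) hφ
      (fun z w => by simp only [hψ, smul_add])
      (fun z w => by simp only [RightCStarModule.inner_op_smul_right, horth, zero_mul])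
      (fun z w => by
        simp only [rcm_inner_op_smul_left, RightCStarModule.inner_op_smul_right]
        exact alg _ _ (heq z w)) x y
  · -- ψ part, with φ' z = φ z <• star (⅟(1 - a) * a)
    have horth2 : ∀ z w : F, inner (𝕜 := A) (ψ z) (φ w) = 0 := by
      intro z w; rw [← RightCStarModule.star_inner, horth, star_zero]
    refine aux_quad f Hadd heven hf0 ψ (fun z => φ z <• star (⅟(1 - a) * a)) hψ
      (fun z w => by simp only [hφ, smul_add])
      (fun z w => by simp only [RightCStarModule.inner_op_smul_right, horth2, zero_mul])
      (fun z w => by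
        simp only [rcm_inner_op_smul_left, RightCStarModule.inner_op_smul_right]
        exact alg2 _ _ (heq z w)) x y
end

section
/- Let A : 𝓔 → 𝓖 be an a-additive mapping (A additive with A(a·x) = a·A(x) for all x ∈ 𝓔) and let B : 𝓔 × 𝓔 → 𝓖 be a biadditive mapping that is a-biadditive (B(a·x, a·x) = a·B(x,x) and B((1−a)·x, (1−a)·x) = (1−a)·B(x,x) for all x ∈ 𝓔) and orthogonality preserving (⟨x,y⟩ = 0 implies B(x,y) = 0). Then for any c ∈ 𝓖, the mapping f : 𝓔 → 𝓖 defined by f(x) = A(x) + B(x,x) + c is orthogonally a-Jensen. -/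
open scoped RightActions

variable {A : Type*} [CStarAlgebra A] [PartialOrder A] [StarOrderedRing A]
variable {E : Type*} [NormedAddCommGroup E] [Module ℂ E] [Module Aᵐᵒᵖ E] [RightCStarModule A E]
variable {F : Type*} [NormedAddCommGroup F] [Module ℂ F] [Module Aᵐᵒᵖ F] [RightCStarModule A F]
variable {G : Type*} [NormedAddCommGroup G] [Module ℂ G] [Module Aᵐᵒᵖ G] [RightCStarModule A G]

/-- If `T` is `a`-additive and `B` is `a`-biadditive and orthogonality preserving, then
`x ↦ T x + B x x + c` is orthogonally `a`-Jensen. -/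
theorem sum_is_orthAJensen (a : A) (T : E → G) (B : E → E → G) (c : G)
    (hTadd : ∀ x y : E, T (x + y) = T x + T y)
    (hTa : ∀ x : E, T (x <• a) = T x <• a)
    (hBadd₁ : ∀ x y z : E, B (x + y) z = B x z + B y z)
    (hBadd₂ : ∀ x y z : E, B x (y + z) = B x y + B x z)
    (hBa : ∀ x : E, B (x <• a) (x <• a) = B x x <• a)
    (hBa' : ∀ x : E, B (x <• (1 - a)) (x <• (1 - a)) = B x x <• (1 - a))
    (hBorth : ∀ x y : E, inner (𝕜 := A) x y = 0 → B x y = 0) :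
    OrthAJensen a (fun x => T x + B x x + c) := by
  intro x y hxy
  have hsplitE : ∀ z : E, z = z <• a + z <• (1 - a) := by
    intro z
    rw [← add_smul, ← MulOpposite.op_add]
    simp
  have hsplit : ∀ z : G, z = z <• a + z <• (1 - a) := by
    intro z
    rw [← add_smul, ← MulOpposite.op_add]
    simp
  have hT1a : ∀ z : E, T (z <• (1 - a)) = T z <• (1 - a) := by
    intro z
    have h : T z = T z <• a + T (z <• (1 - a)) := by
      conv_lhs => rw [hsplitE z]
      rw [hTadd, hTa]
    have h2 : T (z <• (1 - a)) = T z - T z <• a := by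
      rw [eq_sub_iff_add_eq, add_comm]; exact h.symm
    rw [h2]
    simp [MulOpposite.op_sub, sub_smul]
  have h1 : inner (𝕜 := A) (x <• a) (y <• (1 - a)) = 0 := by
    rw [RightCStarModule.inner_op_smul_right, ← RightCStarModule.star_inner y (x <• a),
      RightCStarModule.inner_op_smul_right, ← RightCStarModule.star_inner x y, hxy]
    simp
  have h2 : inner (𝕜 := A) (y <• (1 - a)) (x <• a) = 0 := by
    rw [← RightCStarModule.star_inner, h1, star_zero]
  simp only
  rw [hTadd, hBadd₁, hBadd₂, hBadd₂, hBorth _ _ h1, hBorth _ _ h2, hTa, hT1a, hBa, hBa']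
  conv_lhs => rw [hsplit c]
  rw [smul_add, smul_add, smul_add, smul_add]
  abel
end
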